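/- Let Γ be the group of order 2 generated by a rotation r of ℝ² of order 2 (a half-turn), and let L be a generic Γ-symmetric contact system of line segments in ℝ². Then for every nonempty Γ-invariant subset M ⊆ L, the set of free endpoints of M (endpoints of segments of M not lying in the interior of any segment of M) meets at least two distinct Γ-orbits; that is, there exist free endpoints p, q of M with q ≠ p and q ≠ r(p). -/

import Mathlib

noncomputable section

/-- The Euclidean plane. -/
abbrev Pt := EuclideanSpace ℝ (Fin 2)

/-- `S` is a (nondegenerate, closed) line segment in the plane. -/
def IsSeg (S : Set Pt) : Prop := ∃ p q : Pt, p ≠ q ∧ S = segment ℝ p q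

/-- `x` is an endpoint of the segment `S`. -/
def IsEndpt (x : Pt) (S : Set Pt) : Prop :=
  ∃ p q : Pt, p ≠ q ∧ S = segment ℝ p q ∧ (x = p ∨ x = q)

/-- `x` is an interior (relative interior) point of the segment `S`. -/
def IsIntPt (x : Pt) (S : Set Pt) : Prop :=
  ∃ p q : Pt, p ≠ q ∧ S = segment ℝ p q ∧ x ∈ openSegment ℝ p q

/-- A contact system: a collection of (pairwise distinct) segments such that no
point of the plane is an interior point of more than one segment. -/
def IsContactSystem (L : Set (Set Pt)) : Prop :=
  (∀ S ∈ L, IsSeg S) ∧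
  ∀ x : Pt, ∀ S ∈ L, ∀ T ∈ L, IsIntPt x S → IsIntPt x T → S = T

/-- A 2-contact system: a contact system such that every point of the plane
belongs to at most two of the segments. -/
def Is2ContactSystem (L : Set (Set Pt)) : Prop :=
  IsContactSystem L ∧
  ∀ x : Pt, ∀ S ∈ L, ∀ T ∈ L, ∀ U ∈ L,
    x ∈ S → x ∈ T → x ∈ U → (S = T ∨ S = U ∨ T = U)

/-- A generic contact system: a contact system such that moreover no point of
the plane is an endpoint of more than one segment. -/
def IsGenericCS (L : Set (Set Pt)) : Prop :=
  IsContactSystem L ∧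
  ∀ x : Pt, ∀ S ∈ L, ∀ T ∈ L, IsEndpt x S → IsEndpt x T → S = T

/-- `x` is a free endpoint of the family `M`: an endpoint of some segment of `M`
that lies in the interior of no segment of `M`. -/
def IsFreeEndpt (x : Pt) (M : Set (Set Pt)) : Prop :=
  (∃ l ∈ M, IsEndpt x l) ∧ ∀ m ∈ M, ¬ IsIntPt x m

/-- The group of isometries of the plane (every isometry of the plane is affine). -/
abbrev Iso2 := Pt ≃ᵃⁱ[ℝ] Pt

/-- The determinant of the linear part of a plane isometry. -/
def detOf (g : Iso2) : ℝ :=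
  LinearMap.det g.linearIsometryEquiv.toLinearEquiv.toLinearMap

/-- A rotation: a non-identity orientation-preserving isometry with a fixed point. -/
def IsRotation (g : Iso2) : Prop := g ≠ 1 ∧ detOf g = 1 ∧ ∃ x : Pt, g x = x

/-- A reflection: an orientation-reversing isometry with a fixed point. -/
def IsReflection (g : Iso2) : Prop := detOf g ≠ 1 ∧ ∃ x : Pt, g x = x

/-- A translation: the map `x ↦ x + v` for some `v ≠ 0`. -/
def IsTranslation (g : Iso2) : Prop := ∃ v : Pt, v ≠ 0 ∧ ∀ x : Pt, g x = x + v

/-- (S1): the collection `L` of segments is invariant under `Γ`. -/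
def SatS1 (Γ : Subgroup Iso2) (L : Set (Set Pt)) : Prop :=
  ∀ l ∈ L, ∀ g ∈ Γ, (⇑g) '' l ∈ L

/-- (S2): `L` has finitely many `Γ`-orbits. -/
def SatS2 (Γ : Subgroup Iso2) (L : Set (Set Pt)) : Prop :=
  ∃ T : Set (Set Pt), T.Finite ∧ T ⊆ L ∧
    ∀ l ∈ L, ∃ t ∈ T, ∃ g ∈ Γ, (⇑g) '' t = l

/-- (S4): for every `l ∈ L` and every `x ∈ l` the stabiliser of `x` in `Γ` is trivial. -/
def SatS4 (Γ : Subgroup Iso2) (L : Set (Set Pt)) : Prop :=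
  ∀ l ∈ L, ∀ x ∈ l, ∀ g ∈ Γ, g x = x → g = 1

/-- A subgroup of the isometry group of the plane is discrete iff (equivalently,
for subgroups of `Isom(ℝ²)`, in the natural topology) each of its orbits is a
discrete subset of the plane. -/
def IsDiscreteSubgrp (Γ : Subgroup Iso2) : Prop :=
  ∀ x : Pt, DiscreteTopology {y : Pt | ∃ g ∈ Γ, g x = y}

/-- A generic `Γ`-symmetric contact system: satisfies (S1)-(S4). -/
def IsGenSymmCS (Γ : Subgroup Iso2) (L : Set (Set Pt)) : Prop :=
  IsGenericCS L ∧ SatS1 Γ L ∧ SatS2 Γ L ∧ SatS4 Γ L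

end

open RealInnerProductSpace

lemma pt_ext {x y : Pt} (h0 : x 0 = y 0) (h1 : x 1 = y 1) : x = y := by
  ext i; fin_cases i <;> assumption

lemma inner_coords (x y : Pt) : ⟪x, y⟫ = x 0 * y 0 + x 1 * y 1 := by
  simp [PiLp.inner_apply, Fin.sum_univ_two, RCLike.inner_apply, mul_comm]

lemma isCompact_of_seg (a b : Pt) : IsCompact (segment ℝ a b) := by
  rw [segment_eq_image]
  exact (isCompact_Icc).image (by continuity)

lemma endpoint_of_not_open {x a b : Pt} (h : x ∈ segment ℝ a b)
    (h2 : x ∉ openSegment ℝ a b) : x = a ∨ x = b := by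
  rw [segment_eq_image] at h
  obtain ⟨t, ⟨ht0, ht1⟩, rfl⟩ := h
  rcases eq_or_lt_of_le ht0 with h0 | h0
  · left; rw [← h0]; simp
  rcases eq_or_lt_of_le ht1 with h1 | h1
  · right; rw [h1]; simp
  · exact absurd (by rw [openSegment_eq_image]; exact ⟨t, ⟨h0, h1⟩, rfl⟩) h2

lemma midpoint_mem_seg (a b : Pt) : midpoint ℝ a b ∈ segment ℝ a b := by
  rw [segment_eq_image]
  refine ⟨1/2, by norm_num, ?_⟩
  rw [midpoint_eq_smul_add, invOf_eq_inv]
  module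

lemma lexFree (M : Set (Set Pt)) (hfin : M.Finite) (hne : M.Nonempty)
    (hseg : ∀ l ∈ M, IsSeg l) (u v : Pt)
    (hinj : ∀ x y : Pt, ⟪u, x⟫ = ⟪u, y⟫ → ⟪v, x⟫ = ⟪v, y⟫ → x = y) :
    ∃ x : Pt, IsFreeEndpt x M ∧ ∀ y ∈ ⋃₀ M, ⟪u, y⟫ ≤ ⟪u, x⟫ := by
  have hK : IsCompact (⋃₀ M) := hfin.isCompact_sUnion (fun s hs => by
    obtain ⟨a, b, -, rfl⟩ := hseg s hs; exact isCompact_of_seg a b)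
  obtain ⟨l₀, hl₀⟩ := hne
  obtain ⟨p₀, q₀, hpq₀, hl₀eq⟩ := hseg l₀ hl₀
  have hKne : (⋃₀ M).Nonempty :=
    ⟨p₀, l₀, hl₀, by rw [hl₀eq]; exact left_mem_segment ℝ p₀ q₀⟩
  have hfc : Continuous fun y : Pt => ⟪u, y⟫ := continuous_const.inner continuous_id
  have hgc : Continuous fun y : Pt => ⟪v, y⟫ := continuous_const.inner continuous_id
  obtain ⟨x₁, hx₁K, hx₁⟩ := hK.exists_isMaxOn hKne hfc.continuousOn
  have hFc : IsCompact ((⋃₀ M) ∩ {y | ⟪u, y⟫ = ⟪u, x₁⟫}) :=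
    hK.inter_right (isClosed_eq hfc continuous_const)
  obtain ⟨x, hxF, hgx⟩ := hFc.exists_isMinOn (α := ℝᵒᵈ) ⟨x₁, hx₁K, rfl⟩ hgc.continuousOn
  have hmax : ∀ y ∈ ⋃₀ M, ⟪u, y⟫ ≤ ⟪u, x⟫ := by
    intro y hy; rw [hxF.2]; exact hx₁ hy
  have key : ∀ a b : Pt, a ≠ b → segment ℝ a b ⊆ ⋃₀ M → x ∉ openSegment ℝ a b := by
    intro a b hab hsub hmem
    rw [openSegment_eq_image] at hmem
    obtain ⟨t, ⟨ht0, ht1⟩, hxt⟩ := hmem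
    have hamem := hsub (left_mem_segment ℝ a b)
    have hbmem := hsub (right_mem_segment ℝ a b)
    have ha := hmax a hamem
    have hb := hmax b hbmem
    have hft : ⟪u, x⟫ = (1-t) * ⟪u, a⟫ + t * ⟪u, b⟫ := by
      rw [← hxt, inner_add_right, real_inner_smul_right, real_inner_smul_right]
    have hfa : ⟪u, a⟫ = ⟪u, x⟫ := by nlinarith
    have hfb : ⟪u, b⟫ = ⟪u, x⟫ := by nlinarith
    have haF : a ∈ (⋃₀ M) ∩ {y | ⟪u, y⟫ = ⟪u, x₁⟫} := ⟨hamem, hfa.trans hxF.2⟩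
    have hbF : b ∈ (⋃₀ M) ∩ {y | ⟪u, y⟫ = ⟪u, x₁⟫} := ⟨hbmem, hfb.trans hxF.2⟩
    have hga : ⟪v, a⟫ ≤ ⟪v, x⟫ := hgx haF
    have hgb : ⟪v, b⟫ ≤ ⟪v, x⟫ := hgx hbF
    have hgt : ⟪v, x⟫ = (1-t) * ⟪v, a⟫ + t * ⟪v, b⟫ := by
      rw [← hxt, inner_add_right, real_inner_smul_right, real_inner_smul_right]
    have hva : ⟪v, a⟫ = ⟪v, x⟫ := by nlinarith
    have hvb : ⟪v, b⟫ = ⟪v, x⟫ := by nlinarith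
    exact hab (hinj a b (hfa.trans hfb.symm) (hva.trans hvb.symm))
  refine ⟨x, ⟨?_, ?_⟩, hmax⟩
  · obtain ⟨l, hl, hxl⟩ := hxF.1
    obtain ⟨a, b, hab, hleq⟩ := hseg l hl
    have hsub : segment ℝ a b ⊆ ⋃₀ M := hleq ▸ Set.subset_sUnion_of_mem hl
    have := endpoint_of_not_open (hleq ▸ hxl) (key a b hab hsub)
    exact ⟨l, hl, a, b, hab, hleq, this⟩
  · rintro m hm ⟨a, b, hab, hmeq, hmem⟩
    exact key a b hab (hmeq ▸ Set.subset_sUnion_of_mem hm) hmem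


set_option maxHeartbeats 1000000 in
/-- For `Γ` the group of order 2 generated by a half-turn `r`,
every nonempty `Γ`-invariant subset of a generic `Γ`-symmetric contact system
has free endpoints in at least two distinct `Γ`-orbits. -/
theorem stmt_9 (r : Iso2) (hr : IsRotation r) (hr2 : r * r = 1)
    (L : Set (Set Pt)) (hL : IsGenSymmCS (Subgroup.zpowers r) L) :
    ∀ M ⊆ L, M.Nonempty →
      (∀ l ∈ M, ∀ g ∈ Subgroup.zpowers r, (⇑g) '' l ∈ M) →
      ∃ p q : Pt, IsFreeEndpt p M ∧ IsFreeEndpt q M ∧ q ≠ p ∧ q ≠ r p := by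
  obtain ⟨⟨⟨hsegL, hcontact⟩, hgen⟩, hS1, hS2, hS4⟩ := hL
  intro M hML hMne hMinv
  by_contra hcontra
  push_neg at hcontra
  have hrmem : r ∈ Subgroup.zpowers r := Subgroup.mem_zpowers r
  have hrr : ∀ x : Pt, r (r x) = x := by
    intro x
    have h := congrArg (fun g : Iso2 => g x) hr2
    simpa [AffineIsometryEquiv.coe_mul, Function.comp] using h
  have hr21 : r ^ (2:ℤ) = 1 := by
    rw [show (2:ℤ) = 1 + 1 by norm_num, zpow_add, zpow_one]; exact hr2
  have hzp : ∀ g ∈ Subgroup.zpowers r, g = 1 ∨ g = r := by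
    intro g hg
    obtain ⟨n, rfl⟩ := Subgroup.mem_zpowers_iff.mp hg
    rcases Int.even_or_odd n with ⟨k, hk⟩ | ⟨k, hk⟩
    · left; subst hk
      rw [show k + k = 2 * k by ring, zpow_mul, hr21, one_zpow]
    · right; subst hk
      rw [zpow_add, zpow_mul, hr21, one_zpow, one_mul, zpow_one]
  have hLfin : L.Finite := by
    obtain ⟨T, hTfin, hTL, hTgen⟩ := hS2
    apply Set.Finite.subset (hTfin.union (hTfin.image (fun t => ⇑r '' t)))
    intro l hl
    obtain ⟨t, ht, g, hg, hgt⟩ := hTgen l hl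
    rcases hzp g hg with rfl | rfl
    · left
      rw [← hgt]
      simpa [AffineIsometryEquiv.coe_one, Set.image_id] using ht
    · right; exact ⟨t, ht, hgt⟩
  have hMfin : M.Finite := hLfin.subset hML
  have hsegM : ∀ l ∈ M, IsSeg l := fun l hl => hsegL l (hML hl)
  have hS4M : ∀ m ∈ M, ∀ x ∈ m, r x = x → False := fun m hm x hx hfix =>
    hr.1 (hS4 m (hML hm) x hx r hrmem hfix)
  -- a first free endpoint
  obtain ⟨p, hpfree, -⟩ := lexFree M hMfin hMne hsegM
      (EuclideanSpace.single 0 (1:ℝ)) (EuclideanSpace.single 1 (1:ℝ)) (by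
    intro x y h1 h2
    rw [inner_coords, inner_coords] at h1 h2
    simp [EuclideanSpace.single_apply] at h1 h2
    exact pt_ext h1 h2)
  set a : Pt := r p with ha
  have htwo : ∀ q, IsFreeEndpt q M → q = p ∨ q = a := by
    intro q hq
    by_cases h : q = p
    · exact Or.inl h
    · exact Or.inr (hcontra p q hpfree hq h)
  obtain ⟨⟨lp, hlp, ep⟩, -⟩ := hpfree
  have hpl : p ∈ lp := by
    obtain ⟨s, t, hst, heq, h⟩ := ep
    rcases h with rfl | rfl
    · rw [heq]; exact left_mem_segment ℝ _ _
    · rw [heq]; exact right_mem_segment ℝ _ _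
  have hpa : p ≠ a := by
    intro h
    exact hS4M lp hlp p hpl h.symm
  set u : Pt := a - p with hu
  have hune : u ≠ 0 := by rw [hu]; exact sub_ne_zero_of_ne (Ne.symm hpa)
  have hU : 0 < ⟪u, u⟫ :=
    lt_of_le_of_ne real_inner_self_nonneg
      (fun h => hune (inner_self_eq_zero.mp h.symm))
  have hUc : 0 < u 0 * u 0 + u 1 * u 1 := by rw [inner_coords] at hU; linarith
  set w : Pt := EuclideanSpace.single 0 (-(u 1)) + EuclideanSpace.single 1 (u 0) with hw
  have hw0 : w 0 = -(u 1) := by simp [hw, EuclideanSpace.single_apply]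
  have hw1 : w 1 = u 0 := by simp [hw, EuclideanSpace.single_apply]
  have hinj1 : ∀ x y : Pt, ⟪u, x⟫ = ⟪u, y⟫ → ⟪w, x⟫ = ⟪w, y⟫ → x = y := by
    intro x y h1 h2
    rw [inner_coords, inner_coords] at h1 h2
    rw [hw0, hw1] at h2
    have e0 : (u 0 * u 0 + u 1 * u 1) * (x 0 - y 0) = 0 := by
      linear_combination u 0 * h1 - u 1 * h2
    have e1 : (u 0 * u 0 + u 1 * u 1) * (x 1 - y 1) = 0 := by
      linear_combination u 1 * h1 + u 0 * h2
    have h0 : x 0 - y 0 = 0 := by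
      rcases mul_eq_zero.mp e0 with h | h
      · exact absurd h (ne_of_gt hUc)
      · exact h
    have h1' : x 1 - y 1 = 0 := by
      rcases mul_eq_zero.mp e1 with h | h
      · exact absurd h (ne_of_gt hUc)
      · exact h
    exact pt_ext (by linarith) (by linarith)
  obtain ⟨x1, hx1f, hx1max⟩ := lexFree M hMfin hMne hsegM u w hinj1
  obtain ⟨x2, hx2f, hx2max⟩ := lexFree M hMfin hMne hsegM (-u) w (by
    intro x y h1 h2
    rw [inner_neg_left, inner_neg_left] at h1
    exact hinj1 x y (by linarith) h2)
  obtain ⟨x3, hx3f, hx3max⟩ := lexFree M hMfin hMne hsegM w u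
    (fun x y h1 h2 => hinj1 x y h2 h1)
  obtain ⟨x4, hx4f, hx4max⟩ := lexFree M hMfin hMne hsegM (-w) u (by
    intro x y h1 h2
    rw [inner_neg_left, inner_neg_left] at h1
    exact hinj1 x y h2 (by linarith))
  have hua : ⟪u, a⟫ = ⟪u, p⟫ + ⟪u, u⟫ := by
    have h : ⟪u, a⟫ - ⟪u, p⟫ = ⟪u, u⟫ := by rw [← inner_sub_right, ← hu]
    linarith
  have hwu : ⟪w, u⟫ = 0 := by rw [inner_coords, hw0, hw1]; ring
  have hwa : ⟪w, a⟫ = ⟪w, p⟫ := by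
    have h : ⟪w, a⟫ - ⟪w, p⟫ = ⟪w, u⟫ := by rw [← inner_sub_right, ← hu]
    linarith
  have hbu : ∀ y ∈ ⋃₀ M, ⟪u, y⟫ ≤ ⟪u, a⟫ := by
    intro y hy
    have h := hx1max y hy
    rcases htwo x1 hx1f with h1 | h1 <;> rw [h1] at h <;> linarith
  have hbu' : ∀ y ∈ ⋃₀ M, ⟪u, p⟫ ≤ ⟪u, y⟫ := by
    intro y hy
    have h := hx2max y hy
    rw [inner_neg_left, inner_neg_left] at h
    rcases htwo x2 hx2f with h1 | h1 <;> rw [h1] at h <;> linarith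
  have hweq : ∀ y ∈ ⋃₀ M, ⟪w, y⟫ = ⟪w, p⟫ := by
    intro y hy
    have h3 := hx3max y hy
    have h4 := hx4max y hy
    rw [inner_neg_left, inner_neg_left] at h4
    rcases htwo x3 hx3f with h1 | h1 <;> rw [h1] at h3 <;>
      rcases htwo x4 hx4f with h2 | h2 <;> rw [h2] at h4 <;> linarith
  have hsubseg : ∀ y ∈ ⋃₀ M, ∃ θ : ℝ, 0 ≤ θ ∧ θ ≤ 1 ∧ y = p + θ • u := by
    intro y hy
    refine ⟨(⟪u, y⟫ - ⟪u, p⟫) / ⟪u, u⟫, div_nonneg (by linarith [hbu' y hy]) hU.le, ?_, ?_⟩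
    · rw [div_le_one hU]
      have := hbu y hy
      linarith
    · have h2 : -(u 1) * (y 0 - p 0) + u 0 * (y 1 - p 1) = 0 := by
        have h := hweq y hy
        rw [inner_coords, inner_coords, hw0, hw1] at h
        linarith
      have hre : ⟪u, y⟫ - ⟪u, p⟫ = u 0 * (y 0 - p 0) + u 1 * (y 1 - p 1) := by
        rw [inner_coords, inner_coords]; ring
      have hUeq : ⟪u, u⟫ = u 0 * u 0 + u 1 * u 1 := inner_coords u u
      apply pt_ext
      · rw [PiLp.add_apply, PiLp.smul_apply, smul_eq_mul, hre, hUeq]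
        rw [div_mul_eq_mul_div, add_div' _ _ _ (ne_of_gt hUc), eq_div_iff (ne_of_gt hUc)]
        linear_combination (-(u 1)) * h2
      · rw [PiLp.add_apply, PiLp.smul_apply, smul_eq_mul, hre, hUeq]
        rw [div_mul_eq_mul_div, add_div' _ _ _ (ne_of_gt hUc), eq_div_iff (ne_of_gt hUc)]
        linear_combination (u 0) * h2
  have hysub : ∀ y ∈ ⋃₀ M, y ∈ segment ℝ p a := by
    intro y hy
    obtain ⟨θ, h0, h1, hy'⟩ := hsubseg y hy
    rw [segment_eq_image']
    exact ⟨θ, ⟨h0, h1⟩, by rw [← hu]; exact hy'.symm⟩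
  have hinjseg : ∀ y z : Pt, y ∈ segment ℝ p a → z ∈ segment ℝ p a →
      ⟪u, y⟫ = ⟪u, z⟫ → y = z := by
    intro y z hy hz h
    rw [segment_eq_image'] at hy hz
    obtain ⟨s, hs, rfl⟩ := hy
    obtain ⟨t, ht, rfl⟩ := hz
    rw [← hu] at h ⊢
    rw [inner_add_right, inner_add_right, real_inner_smul_right, real_inner_smul_right] at h
    have hst : s = t := by
      have h' : s * ⟪u, u⟫ = t * ⟪u, u⟫ := by linarith
      exact mul_right_cancel₀ (ne_of_gt hU) h'
    rw [hst]
  set c : Pt := midpoint ℝ p a with hc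
  have hcdef : c = p + (1/2 : ℝ) • u := by
    rw [hc, midpoint_eq_smul_add, invOf_eq_inv, hu]
    module
  have hcseg : c ∈ segment ℝ p a := by
    rw [segment_eq_image']
    exact ⟨1/2, by norm_num, by rw [← hu]; exact hcdef.symm⟩
  have hcval : ⟪u, c⟫ = ⟪u, p⟫ + ⟪u, u⟫ / 2 := by
    rw [hcdef, inner_add_right, real_inner_smul_right]; ring
  have hrc : r c = c := by
    have hmid : r (midpoint ℝ p a) = midpoint ℝ (r p) (r a) := by
      rw [← AffineIsometryEquiv.coe_toAffineEquiv]
      exact r.toAffineEquiv.apply_lineMap p a _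
    have hra : r a = p := by rw [ha]; exact hrr p
    rw [hc, hmid, hra, ← ha, midpoint_comm]
  have hcnot : c ∉ ⋃₀ M := by
    rintro ⟨m, hm, hcm⟩
    exact hS4M m hm c hcm hrc
  have hK : IsCompact (⋃₀ M) := hMfin.isCompact_sUnion (fun s hs => by
    obtain ⟨a', b', -, rfl⟩ := hsegM s hs; exact isCompact_of_seg a' b')
  have hfc : Continuous fun y : Pt => ⟪u, y⟫ := continuous_const.inner continuous_id
  have hFc : IsCompact ((⋃₀ M) ∩ {y | ⟪u, c⟫ ≤ ⟪u, y⟫}) :=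
    hK.inter_right (isClosed_le continuous_const hfc)
  have haM : a ∈ ⋃₀ M := ⟨⇑r '' lp, hMinv lp hlp r hrmem, ⟨p, hpl, ha.symm⟩⟩
  have hFne : ((⋃₀ M) ∩ {y | ⟪u, c⟫ ≤ ⟪u, y⟫}).Nonempty :=
    ⟨a, haM, by rw [Set.mem_setOf_eq, hcval, hua]; linarith⟩
  obtain ⟨x₀, hx₀F, hx₀min⟩ := hFc.exists_isMinOn hFne hfc.continuousOn
  have hhalf : ∀ a' b' : Pt, a' ≠ b' → segment ℝ a' b' ⊆ ⋃₀ M →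
      ⟪u, a'⟫ < ⟪u, b'⟫ → ∀ t : ℝ, 0 < t → t < 1 → x₀ ≠ (1 - t) • a' + t • b' := by
    intro a' b' hab hsub hAB t ht0 ht1 hx
    have hfx : ⟪u, x₀⟫ = (1 - t) * ⟪u, a'⟫ + t * ⟪u, b'⟫ := by
      rw [hx, inner_add_right, real_inner_smul_right, real_inner_smul_right]
    have hcx : ⟪u, c⟫ ≤ ⟪u, x₀⟫ := hx₀F.2
    by_cases hA : ⟪u, c⟫ ≤ ⟪u, a'⟫
    · have haF : a' ∈ (⋃₀ M) ∩ {y | ⟪u, c⟫ ≤ ⟪u, y⟫} :=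
        ⟨hsub (left_mem_segment ℝ a' b'), hA⟩
      have h : ⟪u, x₀⟫ ≤ ⟪u, a'⟫ := hx₀min haF
      have hexp : ⟪u, x₀⟫ - ⟪u, a'⟫ = t * (⟪u, b'⟫ - ⟪u, a'⟫) := by
        rw [hfx]; ring
      have hp := mul_pos ht0 (sub_pos.mpr hAB)
      linarith
    · push_neg at hA
      have hfxB : ⟪u, x₀⟫ ≤ ⟪u, b'⟫ := by
        have hexp : ⟪u, b'⟫ - ⟪u, x₀⟫ = (1 - t) * (⟪u, b'⟫ - ⟪u, a'⟫) := by
          rw [hfx]; ring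
        have hp := mul_nonneg (by linarith : (0:ℝ) ≤ 1 - t) (sub_nonneg.mpr hAB.le)
        linarith
      set τ : ℝ := (⟪u, c⟫ - ⟪u, a'⟫) / (⟪u, b'⟫ - ⟪u, a'⟫) with hτ
      have hτ0 : 0 ≤ τ := div_nonneg (by linarith) (by linarith)
      have hτ1 : τ ≤ 1 := by
        rw [hτ, div_le_one (by linarith)]
        linarith
      have hyM : (1 - τ) • a' + τ • b' ∈ ⋃₀ M := hsub (by
        rw [segment_eq_image]; exact ⟨τ, ⟨hτ0, hτ1⟩, rfl⟩)
      have hBA : ⟪u, b'⟫ - ⟪u, a'⟫ ≠ 0 := ne_of_gt (by linarith)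
      have hτmul : τ * (⟪u, b'⟫ - ⟪u, a'⟫) = ⟪u, c⟫ - ⟪u, a'⟫ :=
        div_mul_cancel₀ _ hBA
      have hyval : ⟪u, (1 - τ) • a' + τ • b'⟫ = ⟪u, c⟫ := by
        rw [inner_add_right, real_inner_smul_right, real_inner_smul_right]
        linear_combination hτmul
      have := hinjseg _ c (hysub _ hyM) hcseg hyval
      exact hcnot (this ▸ hyM)
  have hkey : ∀ a' b' : Pt, a' ≠ b' → segment ℝ a' b' ⊆ ⋃₀ M →
      x₀ ∉ openSegment ℝ a' b' := by
    intro a' b' hab hsub hmem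
    rw [openSegment_eq_image] at hmem
    obtain ⟨t, ⟨ht0, ht1⟩, hxt⟩ := hmem
    have hane : ⟪u, a'⟫ ≠ ⟪u, b'⟫ := fun h =>
      hab (hinjseg a' b' (hysub _ (hsub (left_mem_segment ℝ a' b')))
        (hysub _ (hsub (right_mem_segment ℝ a' b'))) h)
    rcases lt_or_gt_of_ne hane with h | h
    · exact hhalf a' b' hab hsub h t ht0 ht1 hxt.symm
    · refine hhalf b' a' (Ne.symm hab) (by rwa [segment_symm]) h (1 - t)
        (by linarith) (by linarith) ?_
      rw [← hxt]
      module
  have hx₀free : IsFreeEndpt x₀ M := by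
    constructor
    · obtain ⟨m, hm, hxm⟩ := hx₀F.1
      obtain ⟨a', b', hab, hmeq⟩ := hsegM m hm
      have hsub : segment ℝ a' b' ⊆ ⋃₀ M := hmeq ▸ Set.subset_sUnion_of_mem hm
      exact ⟨m, hm, a', b', hab, hmeq,
        endpoint_of_not_open (hmeq ▸ hxm) (hkey a' b' hab hsub)⟩
    · rintro m hm ⟨a', b', hab, hmeq, hmem⟩
      exact hkey a' b' hab (hmeq ▸ Set.subset_sUnion_of_mem hm) hmem
  have hx₀a : x₀ = a := by
    rcases htwo x₀ hx₀free with h | h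
    · exfalso
      have h2 := hx₀F.2
      rw [Set.mem_setOf_eq, h, hcval] at h2
      linarith
    · exact h
  have Hplus : ∀ y ∈ ⋃₀ M, ⟪u, c⟫ ≤ ⟪u, y⟫ → y = a := by
    intro y hy hcy
    have h1 : ⟪u, x₀⟫ ≤ ⟪u, y⟫ := hx₀min ⟨hy, hcy⟩
    rw [hx₀a] at h1
    exact hinjseg y a (hysub y hy) (right_mem_segment ℝ p a)
      (le_antisymm (hbu y hy) h1)
  have Hminus : ∀ y ∈ ⋃₀ M, ⟪u, y⟫ ≤ ⟪u, c⟫ → y = p := by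
    intro y hy hyc
    obtain ⟨m, hm, hym⟩ := hy
    have hryM : r y ∈ ⋃₀ M := ⟨⇑r '' m, hMinv m hm r hrmem, ⟨y, hym, rfl⟩⟩
    obtain ⟨θ, hθ0, hθ1, hyeq⟩ := hsubseg y ⟨m, hm, hym⟩
    have hra : r a = p := by rw [ha]; exact hrr p
    have hry : r y = AffineMap.lineMap a p θ := by
      have h1 : y = AffineMap.lineMap p a θ := by
        rw [AffineMap.lineMap_apply_module, hyeq, hu]
        module
      have h2 : r (AffineMap.lineMap p a θ) = AffineMap.lineMap (r p) (r a) θ := by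
        rw [← AffineIsometryEquiv.coe_toAffineEquiv]
        exact r.toAffineEquiv.apply_lineMap p a θ
      rw [h1, h2, hra, ← ha]
    have hryval : ⟪u, r y⟫ = ⟪u, a⟫ - θ * ⟪u, u⟫ := by
      rw [hry, AffineMap.lineMap_apply_module, inner_add_right,
        real_inner_smul_right, real_inner_smul_right]
      linear_combination (-θ) * hua
    have hyv : ⟪u, y⟫ = ⟪u, p⟫ + θ * ⟪u, u⟫ := by
      rw [hyeq, inner_add_right, real_inner_smul_right]
    have hcy : ⟪u, c⟫ ≤ ⟪u, r y⟫ := by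
      rw [hryval, hcval]
      rw [hcval] at hyc
      linarith [hua]
    have hrya : r y = a := Hplus (r y) hryM hcy
    have : y = r a := by rw [← hrya, hrr]
    rw [this, hra]
  have hclass : ∀ y ∈ ⋃₀ M, y = p ∨ y = a := by
    intro y hy
    rcases le_total ⟪u, y⟫ ⟪u, c⟫ with h | h
    · exact Or.inl (Hminus y hy h)
    · exact Or.inr (Hplus y hy h)
  obtain ⟨l₀, hl₀⟩ := hMne
  obtain ⟨a', b', hab, hleq⟩ := hsegM l₀ hl₀
  have hsub : segment ℝ a' b' ⊆ ⋃₀ M := hleq ▸ Set.subset_sUnion_of_mem hl₀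
  have hmem3 : midpoint ℝ a' b' ∈ ⋃₀ M := hsub (midpoint_mem_seg a' b')
  have hma : midpoint ℝ a' b' ≠ a' := fun h => hab ((midpoint_eq_left_iff ℝ).mp h)
  have hmb : midpoint ℝ a' b' ≠ b' := by
    rw [midpoint_comm]
    exact fun h => hab ((midpoint_eq_left_iff ℝ).mp h).symm
  rcases hclass a' (hsub (left_mem_segment ℝ a' b')) with h1 | h1 <;>
    rcases hclass b' (hsub (right_mem_segment ℝ a' b')) with h2 | h2 <;>
    rcases hclass _ hmem3 with h3 | h3 <;>
    first
      | exact hab (h1.trans h2.symm)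
      | exact hma (h3.trans h1.symm)
      | exact hmb (h3.trans h2.symm)
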